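/- For every positive integer m and all positive integers l_0, l_1, …, l_{m−1}, there exists a finite comet quiver E with cycle c of length m and a vertex v on c such that for each i ∈ {0,1,…,m−1}, the number of paths of E that end at v, do not contain the cycle c, and have length congruent to i modulo m equals l_i. -/

import Mathlib

/-- A quiver (directed graph): vertices, edges, source and range maps. -/
structure Quiv where
  V : Type
  E : Type
  src : E → V
  rng : E → V

namespace Quiv

/-- `es` is a path from `u` to `v` (the empty list is the trivial path at `v`,
in which case `u = v`; a nonempty list is a path `e₁…eₙ` with
`rng eₜ = src eₜ₊₁`, starting at `src e₁ = u` and ending at `rng eₙ = v`). -/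
def IsPathFromTo (G : Quiv) (u : G.V) (es : List G.E) (v : G.V) : Prop :=
  es.Chain' (fun e f => G.rng e = G.src f) ∧
  (es = [] → u = v) ∧
  (∀ e, es.head? = some e → G.src e = u) ∧
  (∀ e, es.getLast? = some e → G.rng e = v)

/-- `es` is a path ending at `v`. -/
def IsPathTo (G : Quiv) (es : List G.E) (v : G.V) : Prop :=
  ∃ u, G.IsPathFromTo u es v

/-- A sink is a vertex emitting no edges. -/
def IsSink (G : Quiv) (v : G.V) : Prop := ∀ e : G.E, G.src e ≠ v

/-- A cycle: a path of positive length ending at its own source, in which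
distinct edges have distinct sources. -/
def IsCycle (G : Quiv) (es : List G.E) : Prop :=
  es ≠ [] ∧ (∃ u, G.IsPathFromTo u es u) ∧
  ∀ e ∈ es, ∀ f ∈ es, e ≠ f → G.src e ≠ G.src f

end Quiv

/-- A path `es` contains the cycle `c` if some rotation of `c` occurs as a
contiguous subpath (infix) of `es`. -/
def Quiv.Contains (G : Quiv) (c es : List G.E) : Prop :=
  ∃ k : ℕ, (c.rotate k) <:+: es

open Fin.NatCast Fin.CommRing

namespace CometAux

variable (m : ℕ) (l : ℕ → ℕ) [NeZero m]

/-- Vertex/edge type: cycle vertices plus `l i - 1` extra source vertices per residue. -/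
abbrev CV := Fin m ⊕ (Σ i : Fin m, Fin (l i.val - 1))

/-- The unique edge out of each vertex, described by its range. -/
def cnxt : CV m l → CV m l
  | .inl j => .inl (j + 1)
  | .inr ⟨i, _⟩ => .inl (1 - i)

/-- The comet quiver: `V = E = CV`, `src = id`, `rng = cnxt`. -/
abbrev CG : Quiv := ⟨CV m l, CV m l, id, cnxt m l⟩

/-- The unique path of length `n` starting at `u`. -/
def orb (u : CV m l) (n : ℕ) : List (CV m l) :=
  (List.range n).map (fun t => (cnxt m l)^[t] u)

variable {m l}

@[simp] lemma orb_length (u : CV m l) (n : ℕ) : (orb m l u n).length = n := by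
  simp [orb]

@[simp] lemma orb_zero (u : CV m l) : orb m l u 0 = [] := by simp [orb]

lemma orb_succ (u : CV m l) (n : ℕ) :
    orb m l u (n + 1) = u :: orb m l (cnxt m l u) n := by
  unfold orb
  rw [List.range_succ_eq_map, List.map_cons, List.map_map]
  refine congrArg (u :: ·) (List.map_congr_left fun t _ => ?_)
  show (cnxt m l)^[t + 1] u = (cnxt m l)^[t] (cnxt m l u)
  exact Function.iterate_succ_apply _ _ _

lemma orb_add (u : CV m l) (a b : ℕ) :
    orb m l u (a + b) = orb m l u a ++ orb m l ((cnxt m l)^[a] u) b := by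
  unfold orb
  rw [List.range_add, List.map_append, List.map_map]
  congr 1
  apply List.map_congr_left
  intro t _
  simp [Function.comp, add_comm a t, Function.iterate_add_apply]

lemma orb_head? (u : CV m l) (n : ℕ) (hn : n ≠ 0) : (orb m l u n).head? = some u := by
  obtain ⟨k, rfl⟩ : ∃ k, n = k + 1 := ⟨n - 1, by omega⟩
  rw [orb_succ, List.head?_cons]

lemma mem_orb {x : CV m l} {u : CV m l} {n : ℕ} :
    x ∈ orb m l u n ↔ ∃ t, t < n ∧ x = (cnxt m l)^[t] u := by
  simp [orb, List.mem_map, eq_comm]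

@[simp] lemma orb_getElem (u : CV m l) (n t : ℕ) (h : t < (orb m l u n).length) :
    (orb m l u n)[t] = (cnxt m l)^[t] u := by
  simp [orb]

lemma iter_inl (j : Fin m) (n : ℕ) :
    (cnxt m l)^[n] (Sum.inl j) = Sum.inl (j + (n : Fin m)) := by
  induction n generalizing j with
  | zero => simp
  | succ n ih =>
    rw [Function.iterate_succ_apply]
    show (cnxt m l)^[n] (Sum.inl (j + 1)) = _
    rw [ih]
    congr 1
    push_cast
    ring_nf

lemma iter_inr (i : Fin m) (t : Fin (l i.val - 1)) (n : ℕ) (hn : 1 ≤ n) :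
    (cnxt m l)^[n] (Sum.inr ⟨i, t⟩) = Sum.inl (1 - i + ((n - 1 : ℕ) : Fin m)) := by
  obtain ⟨k, rfl⟩ : ∃ k, n = k + 1 := ⟨n - 1, by omega⟩
  rw [Function.iterate_succ_apply]
  show (cnxt m l)^[k] (Sum.inl (1 - i)) = _
  rw [iter_inl]
  simp

/-- Paths in the comet quiver are exactly the orbits. -/
lemma path_eq {u v : CV m l} {es : List (CV m l)} (h : (CG m l).IsPathFromTo u es v) :
    es = orb m l u es.length ∧ v = (cnxt m l)^[es.length] u := by
  induction es generalizing u with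
  | nil => exact ⟨by simp, (h.2.1 rfl).symm⟩
  | cons e es ih =>
    obtain ⟨hc, -, hh, hg⟩ := h
    have he : e = u := hh e rfl
    subst he
    have hc' := List.isChain_cons.mp hc
    have htail : (CG m l).IsPathFromTo (cnxt m l e) es v := by
      refine ⟨hc'.2, ?_, ?_, ?_⟩
      · rintro rfl
        exact hg e rfl
      · intro f hf
        exact (hc'.1 f hf).symm
      · intro f hf
        cases es with
        | nil => simp at hf
        | cons g es' => exact hg f (by rw [List.getLast?_cons_cons]; exact hf)
    obtain ⟨h1, h2⟩ := ih htail
    refine ⟨?_, ?_⟩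
    · rw [List.length_cons, orb_succ, ← h1]
    · rw [List.length_cons, Function.iterate_succ_apply, h2]

lemma path_orb (u : CV m l) (n : ℕ) :
    (CG m l).IsPathFromTo u (orb m l u n) ((cnxt m l)^[n] u) := by
  induction n generalizing u with
  | zero => exact ⟨List.isChain_nil, fun _ => rfl, by simp [orb], by simp [orb]⟩
  | succ n ih =>
    rw [orb_succ, Function.iterate_succ_apply]
    have ihu := ih (cnxt m l u)
    refine ⟨?_, ?_, ?_, ?_⟩
    · refine List.isChain_cons.mpr ⟨?_, ihu.1⟩
      intro y hy
      exact (ihu.2.2.1 y hy).symm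
    · intro h; simp at h
    · intro e he
      simp at he
      subst he
      rfl
    · intro e he
      cases n with
      | zero =>
        simp at he
        subst he
        rfl
      | succ k =>
        rw [orb_succ, List.getLast?_cons_cons, ← orb_succ] at he
        exact ihu.2.2.2 e he

variable (m l) in
/-- The distinguished cycle. -/
def cyc : List (CV m l) := orb m l (Sum.inl 0) m

@[simp] lemma cyc_length : (cyc m l).length = m := orb_length _ _

lemma mem_cyc {x : CV m l} : x ∈ cyc m l ↔ ∃ a : Fin m, x = Sum.inl a := by
  constructor
  · rw [cyc, mem_orb]
    rintro ⟨t, ht, rfl⟩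
    exact ⟨_, iter_inl 0 t⟩
  · rintro ⟨a, rfl⟩
    rw [cyc, mem_orb]
    refine ⟨a.val, a.isLt, ?_⟩
    rw [iter_inl, Fin.cast_val_eq_self, zero_add]

lemma cyc_getElem (t : ℕ) (h : t < (cyc m l).length) :
    (cyc m l)[t] = (cnxt m l)^[t] (Sum.inl 0) :=
  orb_getElem _ _ _ h

lemma rotate_cyc (j : Fin m) : (cyc m l).rotate j.val = orb m l (Sum.inl j) m := by
  apply List.ext_getElem
  · simp [cyc]
  · intro t h1 h2
    have hlen : (cyc m l).length = m := cyc_length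
    rw [List.getElem_rotate, cyc_getElem, orb_getElem, iter_inl, iter_inl, zero_add]
    rw [hlen]
    have : (((t + j.val) % m : ℕ) : Fin m) = ((t + j.val : ℕ) : Fin m) := by
      conv_rhs => rw [← Nat.mod_add_div (t + j.val) m]
      push_cast
      simp [Fin.natCast_self]
    rw [this]
    push_cast
    ring_nf

lemma contains_inl (j : Fin m) (n : ℕ) (h : m ≤ n) :
    (CG m l).Contains (cyc m l) (orb m l (Sum.inl j) n) := by
  refine ⟨j.val, ?_⟩
  rw [rotate_cyc]
  obtain ⟨r, rfl⟩ : ∃ r, n = m + r := ⟨n - m, by omega⟩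
  rw [orb_add]
  exact (List.prefix_append _ _).isInfix

lemma not_contains_short (u : CV m l) (n : ℕ) (h : n < m) :
    ¬ (CG m l).Contains (cyc m l) (orb m l u n) := by
  rintro ⟨k, hk⟩
  have := hk.length_le
  rw [List.length_rotate, cyc_length, orb_length] at this
  omega

lemma contains_inr (x : Σ i : Fin m, Fin (l i.val - 1)) (n : ℕ) (h : m + 1 ≤ n) :
    (CG m l).Contains (cyc m l) (orb m l (Sum.inr x) n) := by
  obtain ⟨i, t⟩ := x
  obtain ⟨r, rfl⟩ : ∃ r, n = r + 1 := ⟨n - 1, by omega⟩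
  rw [orb_succ]
  show (CG m l).Contains (cyc m l) (Sum.inr ⟨i, t⟩ :: orb m l (Sum.inl (1 - i)) r)
  obtain ⟨k, hk⟩ := contains_inl (l := l) (1 - i) r (by omega)
  exact ⟨k, hk.trans (List.suffix_cons _ _).isInfix⟩

lemma not_contains_inr (x : Σ i : Fin m, Fin (l i.val - 1)) (n : ℕ) (hn : n ≤ m) :
    ¬ (CG m l).Contains (cyc m l) (orb m l (Sum.inr x) n) := by
  rintro ⟨k, hk⟩
  have hle := hk.length_le
  rw [List.length_rotate, cyc_length, orb_length] at hle
  have hnm : n = m := le_antisymm hn hle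
  have heq : (cyc m l).rotate k = orb m l (Sum.inr x) n :=
    hk.sublist.eq_of_length (by simp [cyc, orb, hnm])
  have hmem : (Sum.inr x : CV m l) ∈ orb m l (Sum.inr x) n := by
    rw [mem_orb]
    exact ⟨0, by have := NeZero.pos m; omega, rfl⟩
  rw [← heq, List.mem_rotate, mem_cyc] at hmem
  obtain ⟨a, ha⟩ := hmem
  exact nomatch ha

lemma isCycle_cyc : (CG m l).IsCycle (cyc m l) := by
  refine ⟨?_, ⟨Sum.inl 0, ?_⟩, ?_⟩
  · intro h
    have := congrArg List.length h
    simp [NeZero.ne m] at this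
  · have := path_orb (Sum.inl (0 : Fin m)) m (l := l)
    rwa [iter_inl, Fin.natCast_self, add_zero] at this
  · intro e _ f _ hef h
    exact hef h

end CometAux




open CometAux

/-- For every `m > 0` and positive `l 0, …, l (m-1)` there is a finite comet
quiver with cycle `c` of length `m` and a vertex `v` on `c` such that, for each
`i < m`, exactly `l i` paths end at `v`, do not contain `c`, and have length
congruent to `i` modulo `m`. -/
theorem stmt12 (m : ℕ) (hm : 0 < m) (l : ℕ → ℕ) (hl : ∀ i, i < m → 0 < l i) :
    ∃ (G : Quiv) (c : List G.E) (v : G.V), Finite G.V ∧ Finite G.E ∧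
      G.IsCycle c ∧ c.length = m ∧
      (∀ c' : List G.E, G.IsCycle c' → ∀ e, e ∈ c' ↔ e ∈ c) ∧
      (∀ u : G.V, ∃ (es : List G.E) (w : G.V),
        G.IsPathFromTo u es w ∧ ∃ e ∈ c, G.src e = w) ∧
      (∃ e ∈ c, G.src e = v) ∧
      ∀ i, i < m →
        {es | G.IsPathTo es v ∧ ¬ G.Contains c es ∧ es.length % m = i}.ncard = l i := by
  haveI : NeZero m := ⟨hm.ne'⟩
  refine ⟨CG m l, cyc m l, Sum.inl 0, (inferInstance : Finite (CV m l)), (inferInstance : Finite (CV m l)), isCycle_cyc, cyc_length,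
    ?_, ?_, ?_, ?_⟩
  · -- every cycle has the same edges as cyc
    rintro c' ⟨hne, ⟨u, hu⟩, -⟩ e
    obtain ⟨h1, h2⟩ := path_eq hu
    set n := c'.length with hn
    have hn1 : 1 ≤ n := by
      cases c' with
      | nil => exact absurd rfl hne
      | cons a t => simp [hn]
    match u with
    | Sum.inr x =>
      rw [iter_inr x.1 x.2 n hn1] at h2
      exact absurd h2 (by simp)
    | Sum.inl j =>
      rw [iter_inl] at h2
      have hz : ((n : ℕ) : Fin m) = 0 := by
        have := h2
        nth_rewrite 1 [← add_zero j] at this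
        exact (add_left_cancel (Sum.inl.inj this)).symm
      have hdvd : m ∣ n := Fin.natCast_eq_zero.mp hz
      have hmn : m ≤ n := Nat.le_of_dvd (by omega) hdvd
      rw [h1, mem_orb, mem_cyc]
      constructor
      · rintro ⟨t, ht, rfl⟩
        rw [iter_inl]
        exact ⟨_, rfl⟩
      · rintro ⟨a, rfl⟩
        refine ⟨(a - j).val, lt_of_lt_of_le (a - j).isLt hmn, ?_⟩
        rw [iter_inl, Fin.cast_val_eq_self]
        congr 1
        rw [add_sub_cancel]
  · -- reachability
    intro u
    match u with
    | Sum.inl j =>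
      exact ⟨[], Sum.inl j, ⟨List.isChain_nil, fun _ => rfl, by simp, by simp⟩,
        Sum.inl j, mem_cyc.mpr ⟨j, rfl⟩, rfl⟩
    | Sum.inr x =>
      refine ⟨orb m l (Sum.inr x) 1, (cnxt m l)^[1] (Sum.inr x), path_orb _ _, ?_⟩
      refine ⟨(cnxt m l)^[1] (Sum.inr x), ?_, rfl⟩
      obtain ⟨i, t⟩ := x
      rw [iter_inr i t 1 le_rfl]
      exact mem_cyc.mpr ⟨_, rfl⟩
  · exact ⟨Sum.inl 0, mem_cyc.mpr ⟨0, rfl⟩, rfl⟩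
  · -- the counting
    intro i hi
    haveI : NeZero (l i) := ⟨(hl i hi).ne'⟩
    set ni : ℕ := if i = 0 then m else i with hni
    have hni1 : 1 ≤ ni := by rw [hni]; split <;> omega
    have hnim : ni ≤ m := by rw [hni]; split <;> omega
    have hnimod : ni % m = i := by
      rw [hni]; split
      · simp [Nat.mod_self, *]
      · exact Nat.mod_eq_of_lt hi
    set F : Fin (l i) → List (CV m l) := fun a =>
      if h : a.val = 0 then orb m l (Sum.inl (-(i : Fin m))) i
      else orb m l (Sum.inr ⟨⟨i, hi⟩, ⟨a.val - 1, show a.val - 1 < l i - 1 by omega⟩⟩) ni with hF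
    have hinj : Function.Injective F := by
      intro a b hab
      rw [hF] at hab
      simp only at hab
      by_cases ha : a.val = 0 <;> by_cases hb : b.val = 0
      · exact Fin.ext (ha.trans hb.symm)
      · exfalso
        rw [dif_pos ha, dif_neg hb] at hab
        have hlen : i = ni := by simpa using congrArg List.length hab
        have hhd := congrArg List.head? hab
        rw [orb_head? _ _ (by omega), orb_head? _ _ (by omega)] at hhd
        exact nomatch Option.some.inj hhd
      · exfalso
        rw [dif_neg ha, dif_pos hb] at hab
        have hlen : ni = i := by simpa using congrArg List.length hab
        have hhd := congrArg List.head? hab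
        rw [orb_head? _ _ (by omega), orb_head? _ _ (by omega)] at hhd
        exact nomatch Option.some.inj hhd
      · rw [dif_neg ha, dif_neg hb] at hab
        have hhd := congrArg List.head? hab
        rw [orb_head? _ _ (by omega), orb_head? _ _ (by omega)] at hhd
        have h1 := Option.some.inj hhd
        simp only [Sum.inr.injEq, Sigma.mk.inj_iff, heq_eq_eq, Fin.mk.injEq, true_and] at h1
        exact Fin.ext (by omega)
    have hcast : ((ni : ℕ) : Fin m) = ⟨i, hi⟩ := by
      apply Fin.ext
      rw [Fin.val_natCast, hnimod]
    have key : {es | (CG m l).IsPathTo es (Sum.inl 0) ∧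
        ¬ (CG m l).Contains (cyc m l) es ∧ es.length % m = i} = Set.range F := by
      ext es
      simp only [Set.mem_setOf_eq, Set.mem_range]
      constructor
      · rintro ⟨⟨u, hu⟩, hnc, hlen⟩
        obtain ⟨h1, h2⟩ := path_eq hu
        set n := es.length with hn
        match u with
        | Sum.inl j =>
          have hnm : n < m := by
            by_contra h
            exact hnc (by rw [h1]; exact contains_inl j n (by omega))
          have hnI : n = i := by rw [← hlen, Nat.mod_eq_of_lt hnm]
          rw [iter_inl] at h2
          have hj : j = -((i : ℕ) : Fin m) := by
            have h3 : j + ((n : ℕ) : Fin m) = 0 := (Sum.inl.inj h2).symm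
            rw [hnI] at h3
            linear_combination h3
          refine ⟨⟨0, hl i hi⟩, ?_⟩
          rw [hF]
          simp only [dif_pos rfl, dif_pos trivial]
          rw [h1, hnI, hj]
        | Sum.inr x =>
          obtain ⟨i0, t⟩ := x
          have hn1 : 1 ≤ n := by
            cases hn0 : n with
            | zero =>
              rw [hn0] at h2
              exact absurd h2 (by simp)
            | succ k => omega
          have hnm : n ≤ m := by
            by_contra h
            exact hnc (by rw [h1]; exact contains_inr ⟨i0, t⟩ n (by omega))
          have hnni : n = ni := by
            rw [hni]
            split
            · rename_i h0
              rw [h0] at hlen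
              have hdvd : m ∣ n := Nat.dvd_of_mod_eq_zero hlen
              have := Nat.le_of_dvd (by omega) hdvd
              omega
            · rename_i h0
              rcases Nat.lt_or_ge n m with h | h
              · rw [← hlen, Nat.mod_eq_of_lt h]
              · have hnm' : n = m := by omega
                rw [hnm', Nat.mod_self] at hlen
                omega
          rw [iter_inr i0 t n hn1] at h2
          have h3 : (1 : Fin m) - i0 + ((n - 1 : ℕ) : Fin m) = 0 := (Sum.inl.inj h2).symm
          rw [Nat.cast_sub hn1] at h3
          have hi0 : i0 = ⟨i, hi⟩ := by
            rw [← hcast, ← hnni]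
            push_cast at h3 ⊢
            linear_combination -h3
          subst hi0
          have ht : t.val < l i - 1 := t.isLt
          refine ⟨⟨t.val + 1, by have := hl i hi; omega⟩, ?_⟩
          rw [hF]
          simp only [dif_neg (Nat.succ_ne_zero t.val)]
          rw [h1, hnni]
          congr 2
      · rintro ⟨a, rfl⟩
        rw [hF]
        simp only
        by_cases ha : a.val = 0
        · rw [dif_pos ha]
          refine ⟨⟨Sum.inl (-((i : ℕ) : Fin m)), ?_⟩, not_contains_short _ i hi, ?_⟩
          · have := path_orb (Sum.inl (-((i : ℕ) : Fin m))) i (l := l)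
            rwa [iter_inl, neg_add_cancel] at this
          · rw [orb_length, Nat.mod_eq_of_lt hi]
        · rw [dif_neg ha]
          refine ⟨⟨Sum.inr ⟨⟨i, hi⟩, ⟨a.val - 1,
              show a.val - 1 < l i - 1 by omega⟩⟩, ?_⟩, not_contains_inr _ ni hnim, ?_⟩
          · have hp := path_orb (Sum.inr ⟨⟨i, hi⟩, ⟨a.val - 1,
              show a.val - 1 < l i - 1 by omega⟩⟩ : CV m l) ni (l := l)
            rw [iter_inr _ _ ni hni1, Nat.cast_sub hni1, hcast] at hp
            convert hp using 2
            push_cast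
            ring
          · rw [orb_length, hnimod]
    rw [key, ← Set.image_univ, Set.ncard_image_of_injective _ hinj, Set.ncard_univ,
      Nat.card_eq_fintype_card, Fintype.card_fin]
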